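/- Let d be a derivation of the Lie algebra 𝔪₂. Then there exist scalars α₁, α₃, …, α_n and β₃, …, β_n such that d(e₁) = α₁ e₁ + Σ_{i=3}^{n} αᵢ eᵢ, d(e₂) = 2α₁ e₂ + Σ_{i=3}^{n} βᵢ eᵢ, and for every i ≥ 3, d(eᵢ) = i α₁ eᵢ + β₃ e_{i+1} + Σ_{j=i+2}^{n+i−2} (β_{j−i+2} − α_{j−i+1}) e_j − α_n e_{n+i−1}. -/

import Mathlib

open Finset

section Aux

variable {L : Type*} [AddCommGroup L] [Module ℂ L] (e : ℕ → L)

lemma aux_indep (hind : LinearIndependent ℂ (fun i : {n : ℕ // 1 ≤ n} => e i.1))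
    (m : ℕ) (c : ℕ → ℂ) (h : ∑ i ∈ Finset.Icc 1 m, c i • e i = 0) :
    ∀ i, 1 ≤ i → i ≤ m → c i = 0 := by
  intro i h1 h2
  rw [linearIndependent_iff'] at hind
  refine hind ((Finset.Icc 1 m).subtype (fun n => 1 ≤ n)) (fun i => c i.1) ?_ ⟨i, h1⟩ ?_
  · show ∑ x ∈ (Finset.Icc 1 m).subtype (fun n => 1 ≤ n), c x.1 • e x.1 = 0
    rw [Finset.sum_subtype_of_mem (fun i => c i • e i) (fun x hx => (Finset.mem_Icc.mp hx).1)]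
    exact h
  · simp [Finset.mem_subtype, Finset.mem_Icc, h1, h2]

lemma aux_repr (hspan : Submodule.span ℂ (Set.range (fun i : {n : ℕ // 1 ≤ n} => e i.1)) = ⊤)
    (x : L) : ∃ (N : ℕ) (c : ℕ → ℂ), (∀ j, j = 0 ∨ j > N → c j = 0) ∧
      x = ∑ i ∈ Finset.Icc 1 N, c i • e i := by
  have hx : x ∈ Submodule.span ℂ (Set.range (fun i : {n : ℕ // 1 ≤ n} => e i.1)) := by
    rw [hspan]; trivial
  rw [Finsupp.mem_span_range_iff_exists_finsupp] at hx
  obtain ⟨f, hf⟩ := hx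
  set N := f.support.sup (fun i => i.1) with hN
  refine ⟨N, fun j => if h : 1 ≤ j then f ⟨j, h⟩ else 0, ?_, ?_⟩
  · intro j hj
    show (if h : 1 ≤ j then f ⟨j, h⟩ else 0) = 0
    rcases hj with hj | hj
    · subst hj; simp
    · rcases Nat.lt_or_ge j 1 with h1 | h1
      · rw [dif_neg]; omega
      · rw [dif_pos h1]
        by_contra hne
        have : (⟨j, h1⟩ : {n : ℕ // 1 ≤ n}) ∈ f.support := Finsupp.mem_support_iff.mpr hne
        have := Finset.le_sup (f := fun i => i.1) this
        simp only at this
        omega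
  · show x = ∑ i ∈ Finset.Icc 1 N, (if h : 1 ≤ i then f ⟨i, h⟩ else 0) • e i
    rw [← hf, Finsupp.sum]
    rw [← Finset.sum_subtype_of_mem
      (fun i => (if h : 1 ≤ i then f ⟨i, h⟩ else 0) • e i) (fun x hx => (Finset.mem_Icc.mp hx).1)]
    have key : ∀ x : {n : ℕ // 1 ≤ n}, (if h : 1 ≤ x.1 then f ⟨x.1, h⟩ else 0) = f x := by
      intro x; rw [dif_pos x.2]
    have h1 : ∑ x ∈ (Finset.Icc 1 N).subtype (fun n => 1 ≤ n),
        (if h : 1 ≤ x.1 then f ⟨x.1, h⟩ else 0) • e x.1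
        = ∑ x ∈ (Finset.Icc 1 N).subtype (fun n => 1 ≤ n), f x • e x.1 :=
      Finset.sum_congr rfl (fun x _ => by rw [key x])
    rw [h1]
    refine Finset.sum_subset ?_ ?_
    · intro x hx
      simp only [Finset.mem_subtype, Finset.mem_Icc]
      refine ⟨x.2, ?_⟩
      have := Finset.le_sup (f := fun i : {n : ℕ // 1 ≤ n} => i.1) hx
      simpa using this
    · intro x _ hx
      rw [Finsupp.notMem_support_iff.mp hx, zero_smul]

end Aux

section Sums

variable {M : Type*} [AddCommGroup M]

lemma aux_split (k m : ℕ) (h1 : 1 ≤ k) (h : k ≤ m) (g : ℕ → M) :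
    ∑ i ∈ Icc k m, g i = g k + ∑ i ∈ Icc (k+1) m, g i := by
  obtain ⟨j, rfl⟩ : ∃ j, k = j + 1 := ⟨k-1, by omega⟩
  rw [Finset.Icc_add_one_left_eq_Ioc, Finset.Icc_add_one_left_eq_Ioc,
    ← Finset.sum_Ioc_consecutive g (by omega : j ≤ j+1) h, Nat.Ioc_succ_singleton,
    Finset.sum_singleton]

lemma aux_split_top (k m : ℕ) (h1 : 1 ≤ k) (h : k ≤ m + 1) (g : ℕ → M) :
    ∑ i ∈ Icc k (m+1), g i = ∑ i ∈ Icc k m, g i + g (m+1) := by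
  obtain ⟨j, rfl⟩ : ∃ j, k = j + 1 := ⟨k-1, by omega⟩
  rw [Finset.Icc_add_one_left_eq_Ioc, Finset.Icc_add_one_left_eq_Ioc,
    ← Finset.sum_Ioc_consecutive g (by omega : j ≤ m) (by omega : m ≤ m+1),
    Nat.Ioc_succ_singleton, Finset.sum_singleton]

lemma aux_shift (p q k : ℕ) (g : ℕ → M) :
    ∑ j ∈ Icc (p+k) (q+k), g j = ∑ j ∈ Icc p q, g (j+k) := by
  rw [← Finset.map_add_right_Icc, Finset.sum_map]
  rfl

lemma aux_sum6 (g : ℕ → M) :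
    ∑ i ∈ Icc 1 6, g i = g 1 + g 2 + g 3 + g 4 + g 5 + g 6 := by
  rw [show (Finset.Icc 1 6 : Finset ℕ) = {1,2,3,4,5,6} from rfl]
  rw [show ({1,2,3,4,5,6} : Finset ℕ) = insert 1 (insert 2 (insert 3 (insert 4 (insert 5 ({6} : Finset ℕ))))) from rfl]
  rw [Finset.sum_insert (by decide), Finset.sum_insert (by decide),
    Finset.sum_insert (by decide), Finset.sum_insert (by decide),
    Finset.sum_insert (by decide), Finset.sum_singleton]
  abel

end Sums

section LieSums
variable {L : Type*} [LieRing L] [LieAlgebra ℂ L]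

lemma my_lie_sum (x : L) (s : Finset ℕ) (f : ℕ → L) :
    ⁅x, ∑ i ∈ s, f i⁆ = ∑ i ∈ s, ⁅x, f i⁆ := by
  induction s using Finset.cons_induction with
  | empty => simp
  | cons i s hi ih => rw [Finset.sum_cons, Finset.sum_cons, lie_add, ih]

lemma my_sum_lie (x : L) (s : Finset ℕ) (f : ℕ → L) :
    ⁅∑ i ∈ s, f i, x⁆ = ∑ i ∈ s, ⁅f i, x⁆ := by
  induction s using Finset.cons_induction with
  | empty => simp
  | cons i s hi ih => rw [Finset.sum_cons, Finset.sum_cons, add_lie, ih]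

end LieSums
/-- Every derivation of the Lie algebra 𝔪₂ (basis e₁, e₂, … with
⁅e₁, eᵢ⁆ = e_{i+1} for i ≥ 2, ⁅e₂, e_j⁆ = e_{j+2} for j ≥ 3, all other brackets of basis
elements zero) has the stated form. -/
theorem m2_derivation_form
    (L : Type*) [LieRing L] [LieAlgebra ℂ L] (e : ℕ → L)
    (hind : LinearIndependent ℂ (fun i : {n : ℕ // 1 ≤ n} => e i.1))
    (hspan : Submodule.span ℂ (Set.range (fun i : {n : ℕ // 1 ≤ n} => e i.1)) = ⊤)
    (hbr1 : ∀ i, 2 ≤ i → ⁅e 1, e i⁆ = e (i + 1))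
    (hbr2 : ∀ j, 3 ≤ j → ⁅e 2, e j⁆ = e (j + 2))
    (hzero : ∀ i j, 3 ≤ i → 3 ≤ j → ⁅e i, e j⁆ = 0)
    (d : Module.End ℂ L)
    (hd : ∀ a b : L, d ⁅a, b⁆ = ⁅d a, b⁆ + ⁅a, d b⁆) :
    ∃ (n : ℕ) (α β : ℕ → ℂ),
      d (e 1) = α 1 • e 1 + ∑ i ∈ Finset.Icc 3 n, α i • e i ∧
      d (e 2) = (2 * α 1) • e 2 + ∑ i ∈ Finset.Icc 3 n, β i • e i ∧
      ∀ i, 3 ≤ i →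
        d (e i) = ((i : ℂ) * α 1) • e i + β 3 • e (i + 1)
          + ∑ j ∈ Finset.Icc (i + 2) (n + i - 2), (β (j - i + 2) - α (j - i + 1)) • e j
          - α n • e (n + i - 1) := by
  obtain ⟨N₁, a, ha, hde1'⟩ := aux_repr e hspan (d (e 1))
  obtain ⟨N₂, b, hb, hde2'⟩ := aux_repr e hspan (d (e 2))
  obtain ⟨n, hn3, hN1, hN2⟩ : ∃ n, 3 ≤ n ∧ N₁ ≤ n ∧ N₂ ≤ n :=
    ⟨max 3 (max N₁ N₂), le_max_left _ _, le_trans (le_max_left _ _) (le_max_right _ _),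
      le_trans (le_max_right _ _) (le_max_right _ _)⟩
  have hde1 : d (e 1) = ∑ i ∈ Icc 1 n, a i • e i := by
    rw [hde1']
    refine Finset.sum_subset (Finset.Icc_subset_Icc le_rfl hN1) ?_
    intro x hx hnx
    simp only [Finset.mem_Icc] at hx hnx
    rw [ha x (Or.inr (by omega)), zero_smul]
  have hde2 : d (e 2) = ∑ i ∈ Icc 1 n, b i • e i := by
    rw [hde2']
    refine Finset.sum_subset (Finset.Icc_subset_Icc le_rfl hN2) ?_
    intro x hx hnx
    simp only [Finset.mem_Icc] at hx hnx
    rw [hb x (Or.inr (by omega)), zero_smul]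
  -- generic bracket computations
  have lieR : ∀ (c : ℕ → ℂ) (j : ℕ), 3 ≤ j →
      ⁅∑ i ∈ Icc 1 n, c i • e i, e j⁆ = c 1 • e (j+1) + c 2 • e (j+2) := by
    intro c j hj
    rw [my_sum_lie, aux_split 1 n le_rfl (by omega), show (1:ℕ)+1 = 2 from rfl,
      aux_split 2 n (by omega) (by omega), show (2:ℕ)+1 = 3 from rfl]
    have hz : ∑ i ∈ Icc 3 n, ⁅c i • e i, e j⁆ = 0 :=
      Finset.sum_eq_zero fun i hi => by
        rw [smul_lie, hzero i j (Finset.mem_Icc.mp hi).1 hj, smul_zero]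
    rw [hz, smul_lie, smul_lie, hbr1 j (by omega), hbr2 j hj, add_zero]
  have lieR2 : ∀ (c : ℕ → ℂ),
      ⁅∑ i ∈ Icc 1 n, c i • e i, e 2⁆ = c 1 • e 3 - ∑ i ∈ Icc 3 n, c i • e (i+2) := by
    intro c
    rw [my_sum_lie, aux_split 1 n le_rfl (by omega), show (1:ℕ)+1 = 2 from rfl,
      aux_split 2 n (by omega) (by omega), show (2:ℕ)+1 = 3 from rfl]
    have hz : ∑ i ∈ Icc 3 n, ⁅c i • e i, e 2⁆ = -∑ i ∈ Icc 3 n, c i • e (i+2) := by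
      rw [← Finset.sum_neg_distrib]
      refine Finset.sum_congr rfl fun i hi => ?_
      rw [smul_lie, ← lie_skew, hbr2 i (Finset.mem_Icc.mp hi).1, smul_neg]
    rw [hz, smul_lie, smul_lie, hbr1 2 le_rfl, show (2:ℕ)+1 = 3 from rfl, lie_self,
      smul_zero, zero_add, ← sub_eq_add_neg]
  have lieL1 : ∀ (c : ℕ → ℂ),
      ⁅e 1, ∑ i ∈ Icc 1 n, c i • e i⁆ = ∑ i ∈ Icc 2 n, c i • e (i+1) := by
    intro c
    rw [my_lie_sum, aux_split 1 n le_rfl (by omega), show (1:ℕ)+1 = 2 from rfl,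
      lie_smul, lie_self, smul_zero, zero_add]
    refine Finset.sum_congr rfl fun i hi => ?_
    rw [lie_smul, hbr1 i (Finset.mem_Icc.mp hi).1]
  have lieL2 : ∀ (c : ℕ → ℂ),
      ⁅e 2, ∑ i ∈ Icc 1 n, c i • e i⁆ = (-(c 1)) • e 3 + ∑ i ∈ Icc 3 n, c i • e (i+2) := by
    intro c
    rw [my_lie_sum, aux_split 1 n le_rfl (by omega), show (1:ℕ)+1 = 2 from rfl,
      aux_split 2 n (by omega) (by omega), show (2:ℕ)+1 = 3 from rfl]
    have h1 : ⁅e 2, c 1 • e 1⁆ = (-(c 1)) • e 3 := by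
      rw [lie_smul, ← lie_skew, hbr1 2 le_rfl, show (2:ℕ)+1 = 3 from rfl, smul_neg, neg_smul]
    have h2 : ⁅e 2, c 2 • e 2⁆ = 0 := by rw [lie_smul, lie_self, smul_zero]
    rw [h1, h2, zero_add]
    congr 1
    refine Finset.sum_congr rfl fun i hi => ?_
    rw [lie_smul, hbr2 i (Finset.mem_Icc.mp hi).1]
  -- d (e 3)
  have hde3 : d (e 3) = (a 1 • e 3 - ∑ i ∈ Icc 3 n, a i • e (i+2))
      + ∑ i ∈ Icc 2 n, b i • e (i+1) := by
    have h := hd (e 1) (e 2)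
    rw [hbr1 2 le_rfl, show (2:ℕ)+1 = 3 from rfl, hde1, hde2, lieR2 a, lieL1 b] at h
    exact h
  -- d (e 4)
  have hde4 : d (e 4) = (a 1 • e 4 + a 2 • e 5)
      + ((a 1 • e 4 - ∑ i ∈ Icc 3 n, a i • e (i+3)) + ∑ i ∈ Icc 2 n, b i • e (i+2)) := by
    have h := hd (e 1) (e 3)
    rw [hbr1 3 (by omega), show (3:ℕ)+1 = 4 from rfl, hde1, lieR a 3 le_rfl,
      show (3:ℕ)+1 = 4 from rfl, show (3:ℕ)+2 = 5 from rfl, hde3] at h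
    simp only [lie_add, lie_sub, lie_smul, my_lie_sum] at h
    rw [hbr1 3 (by omega), show (3:ℕ)+1 = 4 from rfl] at h
    have h1 : ∑ i ∈ Icc 3 n, a i • ⁅e 1, e (i+2)⁆ = ∑ i ∈ Icc 3 n, a i • e (i+3) :=
      Finset.sum_congr rfl fun i hi => by
        rw [hbr1 (i+2) (by omega), show i+2+1 = i+3 from by omega]
    have h2 : ∑ i ∈ Icc 2 n, b i • ⁅e 1, e (i+1)⁆ = ∑ i ∈ Icc 2 n, b i • e (i+2) :=
      Finset.sum_congr rfl fun i hi => by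
        simp only [Finset.mem_Icc] at hi
        rw [hbr1 (i+1) (by omega), show i+1+1 = i+2 from by omega]
    rw [h1, h2] at h
    exact h
  -- d (e 5), first way
  have hde5a : d (e 5) = (a 1 • e 5 + a 2 • e 6)
      + ((a 1 • e 5 + a 2 • e 6)
        + ((a 1 • e 5 - ∑ i ∈ Icc 3 n, a i • e (i+4)) + ∑ i ∈ Icc 2 n, b i • e (i+3))) := by
    have h := hd (e 1) (e 4)
    rw [hbr1 4 (by omega), show (4:ℕ)+1 = 5 from rfl, hde1, lieR a 4 (by omega),
      show (4:ℕ)+1 = 5 from rfl, show (4:ℕ)+2 = 6 from rfl, hde4] at h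
    simp only [lie_add, lie_sub, lie_smul, my_lie_sum] at h
    rw [hbr1 4 (by omega), hbr1 5 (by omega),
      show (4:ℕ)+1 = 5 from rfl, show (5:ℕ)+1 = 6 from rfl] at h
    have h1 : ∑ i ∈ Icc 3 n, a i • ⁅e 1, e (i+3)⁆ = ∑ i ∈ Icc 3 n, a i • e (i+4) :=
      Finset.sum_congr rfl fun i hi => by
        rw [hbr1 (i+3) (by omega), show i+3+1 = i+4 from by omega]
    have h2 : ∑ i ∈ Icc 2 n, b i • ⁅e 1, e (i+2)⁆ = ∑ i ∈ Icc 2 n, b i • e (i+3) :=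
      Finset.sum_congr rfl fun i hi => by
        rw [hbr1 (i+2) (by omega), show i+2+1 = i+3 from by omega]
    rw [h1, h2] at h
    exact h
  -- d (e 5), second way
  have hde5b : d (e 5) = (b 1 • e 4 + b 2 • e 5)
      + ((a 1 • e 5 - ∑ i ∈ Icc 3 n, a i • e (i+4)) + ∑ i ∈ Icc 2 n, b i • e (i+3)) := by
    have h := hd (e 2) (e 3)
    rw [hbr2 3 le_rfl, show (3:ℕ)+2 = 5 from rfl, hde2, lieR b 3 le_rfl,
      show (3:ℕ)+1 = 4 from rfl, show (3:ℕ)+2 = 5 from rfl, hde3] at h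
    simp only [lie_add, lie_sub, lie_smul, my_lie_sum] at h
    rw [hbr2 3 le_rfl, show (3:ℕ)+2 = 5 from rfl] at h
    have h1 : ∑ i ∈ Icc 3 n, a i • ⁅e 2, e (i+2)⁆ = ∑ i ∈ Icc 3 n, a i • e (i+4) :=
      Finset.sum_congr rfl fun i hi => by
        simp only [Finset.mem_Icc] at hi
        rw [hbr2 (i+2) (by omega), show i+2+2 = i+4 from by omega]
    have h2 : ∑ i ∈ Icc 2 n, b i • ⁅e 2, e (i+1)⁆ = ∑ i ∈ Icc 2 n, b i • e (i+3) :=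
      Finset.sum_congr rfl fun i hi => by
        simp only [Finset.mem_Icc] at hi
        rw [hbr2 (i+1) (by omega), show i+1+2 = i+3 from by omega]
    rw [h1, h2] at h
    exact h
  -- extract coefficient relations
  have heq := hde5a.symm.trans hde5b
  have h0 : ∑ i ∈ Icc 1 6, (fun i => if i = 4 then b 1 else if i = 5 then b 2 - 2*a 1
      else if i = 6 then -(2*a 2) else 0) i • e i = 0 := by
    have h' : ((b 1 • e 4 + b 2 • e 5)
      + ((a 1 • e 5 - ∑ i ∈ Icc 3 n, a i • e (i+4)) + ∑ i ∈ Icc 2 n, b i • e (i+3)))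
      - ((a 1 • e 5 + a 2 • e 6)
      + ((a 1 • e 5 + a 2 • e 6)
        + ((a 1 • e 5 - ∑ i ∈ Icc 3 n, a i • e (i+4)) + ∑ i ∈ Icc 2 n, b i • e (i+3)))) = 0 :=
      sub_eq_zero_of_eq heq.symm
    rw [aux_sum6]
    norm_num
    rw [← h']
    module
  have hb1 : b 1 = 0 := by
    have := aux_indep e hind 6 _ h0 4 (by norm_num) (by norm_num)
    simpa using this
  have hb2 : b 2 = 2 * a 1 := by
    have := aux_indep e hind 6 _ h0 5 (by norm_num) (by norm_num)
    norm_num at this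
    linear_combination this
  have ha2 : a 2 = 0 := by
    have := aux_indep e hind 6 _ h0 6 (by norm_num) (by norm_num)
    norm_num at this
    exact this
  -- conclusion
  refine ⟨n, a, b, ?_, ?_, ?_⟩
  · rw [hde1, aux_split 1 n le_rfl (by omega), show (1:ℕ)+1 = 2 from rfl,
      aux_split 2 n (by omega) (by omega), show (2:ℕ)+1 = 3 from rfl, ha2, zero_smul, zero_add]
  · rw [hde2, aux_split 1 n le_rfl (by omega), show (1:ℕ)+1 = 2 from rfl,
      aux_split 2 n (by omega) (by omega), show (2:ℕ)+1 = 3 from rfl, hb1, hb2, zero_smul,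
      zero_add]
  · intro i hi
    induction i, hi using Nat.le_induction with
    | base =>
      refine hde3.trans ?_
      rw [show n+3-2 = n+1 from by omega, show n+3-1 = n+2 from by omega]
      have s1 : ∑ i ∈ Icc 2 n, b i • e (i+1)
          = b 2 • e 3 + (b 3 • e 4 + ∑ i ∈ Icc 4 n, b i • e (i+1)) := by
        rw [aux_split 2 n (by omega) (by omega), show (2:ℕ)+1 = 3 from rfl,
          aux_split 3 n (by omega) hn3, show (3:ℕ)+1 = 4 from rfl]
      have s2 : ∑ j ∈ Icc (3+2) (n+1), (b (j-3+2) - a (j-3+1)) • e j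
          = ∑ i ∈ Icc 4 n, b i • e (i+1) - ∑ i ∈ Icc 4 n, a (i-1) • e (i+1) := by
        rw [show (3+2 : ℕ) = 4+1 from rfl, aux_shift 4 n 1, ← Finset.sum_sub_distrib]
        refine Finset.sum_congr rfl fun i hi => ?_
        simp only [Finset.mem_Icc] at hi
        rw [show i+1-3+2 = i from by omega, show i+1-3+1 = i-1 from by omega, sub_smul]
      have s3 : ∑ i ∈ Icc 3 n, a i • e (i+2)
          = ∑ i ∈ Icc 4 n, a (i-1) • e (i+1) + a n • e (n+2) := by
        obtain ⟨m, rfl⟩ : ∃ m, n = m+1 := ⟨n-1, by omega⟩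
        rw [show (4:ℕ) = 3+1 from rfl, aux_shift 3 m 1, aux_split_top 3 m (by omega) (by omega)]
        congr 1
      rw [s1, s2, s3, hb2]
      push_cast
      module
    | succ i hi IH =>
      have h := hd (e 1) (e i)
      rw [hbr1 i (by omega), hde1, lieR a i (by omega), IH] at h
      simp only [lie_add, lie_sub, lie_smul, my_lie_sum] at h
      rw [hbr1 i (by omega), hbr1 (i+1) (by omega), hbr1 (n+i-1) (by omega)] at h
      have hsum : ∑ j ∈ Icc (i+2) (n+i-2), (b (j-i+2) - a (j-i+1)) • ⁅e 1, e j⁆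
          = ∑ j ∈ Icc (i+2) (n+i-2), (b (j-i+2) - a (j-i+1)) • e (j+1) :=
        Finset.sum_congr rfl fun j hj => by
          simp only [Finset.mem_Icc] at hj
          rw [hbr1 j (by omega)]
      rw [hsum, show n+i-1+1 = n+i from by omega] at h
      refine h.trans ?_
      rw [show n+(i+1)-2 = n+i-1 from by omega, show n+(i+1)-1 = n+i from by omega]
      have s : ∑ j ∈ Icc (i+1+2) (n+i-1), (b (j-(i+1)+2) - a (j-(i+1)+1)) • e j
          = ∑ j ∈ Icc (i+2) (n+i-2), (b (j-i+2) - a (j-i+1)) • e (j+1) := by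
        rw [show i+1+2 = (i+2)+1 from by omega, show n+i-1 = (n+i-2)+1 from by omega,
          aux_shift (i+2) (n+i-2) 1]
        refine Finset.sum_congr rfl fun j hj => ?_
        simp only [Finset.mem_Icc] at hj
        rw [show j+1-(i+1)+2 = j-i+2 from by omega, show j+1-(i+1)+1 = j-i+1 from by omega]
      rw [s, ha2]
      push_cast
      module
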